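/- Fix j ∈ [N] and let I_j = {i_1,…,i_k} be a uniformly random k-subset of [N]\{j} (with a uniform random ordering). Define Y_{j,l} = ⟨φ_j, φ_{i_l}⟩² and Z_t = E[∑_{l=1}^k Y_{j,l} | Y_{j,1},…,Y_{j,t}] for t = 0,…,k. Then (Z_t) is a martingale with respect to the natural filtration, and |Z_t - Z_{t-1}| ≤ 2μ²(N-2)/(N-k-2) for each t = 1,…,k, where μ is the mutual coherence of Φ. -/

import Mathlib

open MeasureTheory

/-- The sample space: ordered `k`-tuples of distinct indices from `[N] \ {j}`. -/
abbrev Tuples (N k : ℕ) (j : Fin N) : Type :=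
  {f : Fin k → Fin N // Function.Injective f ∧ ∀ l, f l ≠ j}

noncomputable instance (N k : ℕ) (j : Fin N) : Fintype (Tuples N k j) :=
  Fintype.ofFinite _

instance (N k : ℕ) (j : Fin N) : MeasurableSpace (Tuples N k j) := ⊤

/-- The uniform probability measure on ordered tuples. -/
noncomputable def uniformTuples (N k : ℕ) (j : Fin N) : Measure (Tuples N k j) :=
  ((Fintype.card (Tuples N k j) : ENNReal))⁻¹ • Measure.count

/-- The natural filtration generated by `Y_1, …, Y_t`. -/
noncomputable def natFilt {Ω : Type*} (k : ℕ) (Y : Fin k → Ω → ℝ) :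
    Filtration ℕ (⊤ : MeasurableSpace Ω) where
  seq n := ⨆ l : Fin k, ⨆ _ : (l : ℕ) < n, MeasurableSpace.comap (Y l) inferInstance
  mono' := by
    intro a b hab
    refine iSup_mono fun l => ?_
    exact iSup_le fun hl => le_iSup (fun _ : (l : ℕ) < b =>
      MeasurableSpace.comap (Y l) inferInstance) (lt_of_lt_of_le hl hab)
  le' := fun _ => le_top

namespace Stmt10Aux

open Finset

variable {N k : ℕ} {j : Fin N}

/-- prefix map -/
def pmap (t : ℕ) (ω : Tuples N k j) : Fin k → Fin N :=
  fun l => if (l : ℕ) < t then ω.val l else j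

def ltF (k t : ℕ) : Finset (Fin k) := univ.filter (fun l : Fin k => (l : ℕ) < t)

lemma card_ltF (t : ℕ) (ht : t ≤ k) : (ltF k t).card = t := by
  have h : ltF k t = Finset.map (Fin.castLEEmb ht) univ := by
    ext l
    simp only [ltF, mem_filter, mem_univ, true_and, mem_map]
    constructor
    · intro hl
      exact ⟨⟨l, hl⟩, rfl⟩
    · rintro ⟨a, -, rfl⟩
      simpa [Fin.castLEEmb] using a.isLt
  rw [h, card_map, card_univ, Fintype.card_fin]

lemma tuples_nonempty (hN : k + 2 < N) : Nonempty (Tuples N k j) := by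
  refine ⟨⟨fun l => if (l : ℕ) < (j : ℕ) then ⟨l, by have := l.2; omega⟩
    else ⟨l + 1, by have := l.2; omega⟩, ?_, ?_⟩⟩
  · intro a b h
    have h' := congrArg Fin.val h
    have ha := a.2; have hb := b.2
    apply Fin.ext
    dsimp only at h'
    split_ifs at h' <;> simp only [Fin.val_mk] at h' <;> omega
  · intro l h
    have h' := congrArg Fin.val h
    dsimp only at h'
    split_ifs at h' <;> simp only [Fin.val_mk] at h' <;> omega

lemma uniform_prob (hN : k + 2 < N) : IsProbabilityMeasure (uniformTuples N k j) := by
  haveI := tuples_nonempty (N := N) (k := k) (j := j) hN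
  constructor
  rw [uniformTuples, Measure.smul_apply, smul_eq_mul, Measure.count_univ,
    ENat.card_eq_coe_fintype_card, ENat.toENNReal_coe]
  refine ENNReal.inv_mul_cancel ?_ (ENNReal.natCast_ne_top _)
  exact_mod_cast Fintype.card_ne_zero


noncomputable def fib (j : Fin N) (t : ℕ) (p : Fin k → Fin N) : Finset (Tuples N k j) :=
  univ.filter (fun ω => pmap t ω = p)

noncomputable def pre (t : ℕ) (p : Fin k → Fin N) : Finset (Fin N) := (ltF k t).image p

noncomputable def pool (j : Fin N) (t : ℕ) (p : Fin k → Fin N) : Finset (Fin N) :=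
  (univ.erase j) \ pre t p

lemma mem_fib_val {t : ℕ} {p : Fin k → Fin N} {ω : Tuples N k j} (hω : ω ∈ fib j t p)
    {l : Fin k} (hl : (l : ℕ) < t) : ω.val l = p l := by
  have := (mem_filter.mp hω).2
  have := congrFun this l
  simpa [pmap, hl] using this

lemma mem_pool_iff {t : ℕ} {p : Fin k → Fin N} {x : Fin N} :
    x ∈ pool j t p ↔ (x ≠ j ∧ ∀ m : Fin k, (m : ℕ) < t → p m ≠ x) := by
  simp only [pool, pre, ltF, mem_sdiff, mem_erase, mem_univ, and_true, mem_image, mem_filter,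
    true_and, not_exists, not_and]

lemma val_mem_pool {t : ℕ} {p : Fin k → Fin N} {ω : Tuples N k j} (hω : ω ∈ fib j t p)
    (l : Fin k) (hl : ¬ (l : ℕ) < t) : ω.val l ∈ pool j t p := by
  rw [mem_pool_iff]
  refine ⟨ω.2.2 l, fun m hm hpm => ?_⟩
  rw [← mem_fib_val hω hm] at hpm
  exact hl (ω.2.1 hpm ▸ hm)

noncomputable def swapTup (x x' : Fin N) (hxj : x ≠ j) (hx'j : x' ≠ j) (ω : Tuples N k j) :
    Tuples N k j :=
  ⟨Equiv.swap x x' ∘ ω.val, (Equiv.swap x x').injective.comp ω.2.1,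
    fun m h => ω.2.2 m ((Equiv.swap x x').injective (h.trans
      (Equiv.swap_apply_of_ne_of_ne (Ne.symm hxj) (Ne.symm hx'j)).symm))⟩

lemma card_fib_swap {t : ℕ} {p : Fin k → Fin N} (l : Fin k)
    {x x' : Fin N} (hx : x ∈ pool j t p) (hx' : x' ∈ pool j t p) :
    ((fib j t p).filter (fun ω => ω.val l = x)).card
      = ((fib j t p).filter (fun ω => ω.val l = x')).card := by
  obtain ⟨hxj, hxp⟩ := mem_pool_iff.mp hx
  obtain ⟨hx'j, hx'p⟩ := mem_pool_iff.mp hx'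
  have hmap : ∀ ω : Tuples N k j, ∀ y : Fin N,
      ω ∈ (fib j t p).filter (fun ω => ω.val l = y) →
      swapTup x x' hxj hx'j ω ∈ (fib j t p).filter (fun ω => ω.val l = Equiv.swap x x' y) := by
    intro ω y hω
    obtain ⟨hωf, hωl⟩ := mem_filter.mp hω
    refine mem_filter.mpr ⟨mem_filter.mpr ⟨mem_univ _, funext fun m => ?_⟩, by
      simp [swapTup, hωl]⟩
    simp only [pmap, swapTup, Function.comp_apply]
    by_cases hm : (m : ℕ) < t
    · have hv : ω.val m = p m := mem_fib_val hωf hm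
      rw [if_pos hm, hv, Equiv.swap_apply_of_ne_of_ne (hxp m hm) (hx'p m hm)]
    · rw [if_neg hm]
      have := congrFun (mem_filter.mp hωf).2 m
      simpa [pmap, hm] using this
  have hinv : ∀ ω : Tuples N k j, swapTup x x' hxj hx'j (swapTup x x' hxj hx'j ω) = ω := by
    intro ω
    apply Subtype.ext
    funext m
    simp [swapTup, Equiv.swap_apply_self]
  refine Finset.card_bij' (fun ω _ => swapTup x x' hxj hx'j ω)
    (fun ω _ => swapTup x x' hxj hx'j ω) ?_ ?_ ?_ ?_
  · intro ω hω
    have := hmap ω x hω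
    rwa [Equiv.swap_apply_left] at this
  · intro ω hω
    have := hmap ω x' hω
    rwa [Equiv.swap_apply_right] at this
  · intro ω hω
    exact hinv ω
  · intro ω hω
    exact hinv ω

lemma sumA (t : ℕ) (p : Fin k → Fin N) (l : Fin k) (hl : ¬ (l : ℕ) < t) (f : Fin N → ℝ) :
    ((pool j t p).card : ℝ) * ∑ ω ∈ fib j t p, f (ω.val l)
      = ((fib j t p).card : ℝ) * ∑ x ∈ pool j t p, f x := by
  classical
  have hmaps : ∀ ω ∈ fib j t p, ω.val l ∈ pool j t p := fun ω hω => val_mem_pool hω l hl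
  have h1 : ∑ ω ∈ fib j t p, f (ω.val l)
      = ∑ x ∈ pool j t p, (((fib j t p).filter (fun ω => ω.val l = x)).card : ℝ) * f x := by
    rw [← Finset.sum_fiberwise_of_maps_to hmaps (fun ω => f (ω.val l))]
    refine Finset.sum_congr rfl fun x hx => ?_
    rw [Finset.sum_congr rfl (fun ω hω => by rw [(Finset.mem_filter.mp hω).2]),
      Finset.sum_const, nsmul_eq_mul]
  have h3 : ((fib j t p).card : ℝ)
      = ∑ x ∈ pool j t p, (((fib j t p).filter (fun ω => ω.val l = x)).card : ℝ) := by
    rw [Finset.card_eq_sum_card_fiberwise hmaps]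
    push_cast
    rfl
  rw [h1, h3, Finset.sum_mul]
  calc ((pool j t p).card : ℝ)
        * ∑ x ∈ pool j t p, (((fib j t p).filter (fun ω => ω.val l = x)).card : ℝ) * f x
      = ∑ _x' ∈ pool j t p,
          ∑ x ∈ pool j t p, (((fib j t p).filter (fun ω => ω.val l = x)).card : ℝ) * f x := by
        rw [Finset.sum_const, nsmul_eq_mul]
    _ = ∑ x' ∈ pool j t p,
          (((fib j t p).filter (fun ω => ω.val l = x')).card : ℝ) * ∑ x ∈ pool j t p, f x := by
        refine Finset.sum_congr rfl fun x' hx' => ?_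
        rw [Finset.mul_sum]
        refine Finset.sum_congr rfl fun x hx => ?_
        rw [card_fib_swap l hx hx']

lemma fiber_sum (hN : k + 2 < N) {t : ℕ} (ht : t ≤ k) (f : Fin N → ℝ) (p : Fin k → Fin N) :
    ∑ ω ∈ fib j t p, (∑ l, f (ω.val l))
      = ∑ ω ∈ fib j t p, ((∑ l ∈ ltF k t, f (ω.val l))
          + ((k : ℝ) - t) * ((∑ i ∈ univ.erase j, f i) - ∑ l ∈ ltF k t, f (ω.val l))
            / ((N : ℝ) - 1 - t)) := by
  classical
  rcases (fib j t p).eq_empty_or_nonempty with h | ⟨ω₀, hω₀⟩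
  · simp [h]
  set T : ℝ := ∑ i ∈ univ.erase j, f i with hT
  set Sp : ℝ := ∑ m ∈ ltF k t, f (p m) with hSp
  have hmemF : ∀ m : Fin k, m ∈ ltF k t ↔ (m : ℕ) < t := by
    intro m; simp [ltF]
  have hSt : ∀ ω ∈ fib j t p, ∑ l ∈ ltF k t, f (ω.val l) = Sp := by
    intro ω hω
    exact Finset.sum_congr rfl fun m hm => by rw [mem_fib_val hω ((hmemF m).mp hm)]
  have hinj : Set.InjOn p (ltF k t) := by
    intro a ha b hb hab
    rw [← mem_fib_val hω₀ ((hmemF a).mp ha), ← mem_fib_val hω₀ ((hmemF b).mp hb)] at hab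
    exact ω₀.2.1 hab
  have hpre_card : (pre t p).card = t := by
    rw [pre, Finset.card_image_of_injOn hinj, card_ltF t ht]
  have hpre_sub : pre t p ⊆ univ.erase j := by
    intro x hx
    obtain ⟨m, hm, rfl⟩ := Finset.mem_image.mp hx
    rw [← mem_fib_val hω₀ ((hmemF m).mp hm)]
    exact Finset.mem_erase.mpr ⟨ω₀.2.2 m, mem_univ _⟩
  have hcard_erase : (univ.erase j).card = N - 1 := by
    rw [Finset.card_erase_of_mem (mem_univ j), card_univ, Fintype.card_fin]
  have hpool_card : (pool j t p).card = N - 1 - t := by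
    rw [pool, Finset.card_sdiff_of_subset hpre_sub, hcard_erase, hpre_card]
  have hcastpool : ((pool j t p).card : ℝ) = (N : ℝ) - 1 - t := by
    rw [hpool_card]
    have h1 : t ≤ N - 1 := by omega
    have h2 : 1 ≤ N := by omega
    push_cast [Nat.cast_sub h1, Nat.cast_sub h2]
    ring
  have hpool_pos : (0 : ℝ) < ((pool j t p).card : ℝ) := by
    rw [hcastpool]
    have hk' : (k : ℝ) + 2 < N := by exact_mod_cast hN
    have ht' : (t : ℝ) ≤ k := by exact_mod_cast ht
    linarith
  have hsum_pool : ∑ x ∈ pool j t p, f x = T - Sp := by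
    rw [pool, Finset.sum_sdiff_eq_sub hpre_sub, hT, hSp, pre,
      Finset.sum_image (fun a ha b hb hab => hinj ha hb hab)]
  have hnotF_card : (univ.filter (fun l : Fin k => ¬ (l : ℕ) < t)).card = k - t := by
    have := Finset.card_filter_add_card_filter_not
      (s := (univ : Finset (Fin k))) (p := fun l : Fin k => (l : ℕ) < t)
    rw [card_univ, Fintype.card_fin] at this
    have h2 : (ltF k t).card = t := card_ltF t ht
    rw [ltF] at h2
    omega
  have hsplit : ∀ ω : Tuples N k j, ∑ l, f (ω.val l)
      = (∑ l ∈ ltF k t, f (ω.val l))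
        + ∑ l ∈ univ.filter (fun l : Fin k => ¬ (l : ℕ) < t), f (ω.val l) := by
    intro ω
    rw [ltF, Finset.sum_filter_add_sum_filter_not]
  have hinner : ∀ l ∈ univ.filter (fun l : Fin k => ¬ (l : ℕ) < t),
      ∑ ω ∈ fib j t p, f (ω.val l) = ((fib j t p).card : ℝ) * (T - Sp)
        / ((pool j t p).card : ℝ) := by
    intro l hl
    have hl' : ¬ (l : ℕ) < t := (Finset.mem_filter.mp hl).2
    have := sumA (j := j) t p l hl' f
    rw [hsum_pool] at this
    field_simp
    linarith [this]
  calc ∑ ω ∈ fib j t p, (∑ l, f (ω.val l))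
      = ∑ ω ∈ fib j t p, ((∑ l ∈ ltF k t, f (ω.val l))
          + ∑ l ∈ univ.filter (fun l : Fin k => ¬ (l : ℕ) < t), f (ω.val l)) :=
        Finset.sum_congr rfl fun ω _ => hsplit ω
    _ = ((fib j t p).card : ℝ) * Sp
        + ∑ l ∈ univ.filter (fun l : Fin k => ¬ (l : ℕ) < t), ∑ ω ∈ fib j t p, f (ω.val l) := by
        rw [Finset.sum_add_distrib]
        congr 1
        · rw [Finset.sum_congr rfl hSt, Finset.sum_const, nsmul_eq_mul]
        · rw [Finset.sum_comm]
    _ = ((fib j t p).card : ℝ) * Sp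
        + ((k : ℝ) - t) * (((fib j t p).card : ℝ) * (T - Sp) / ((N : ℝ) - 1 - t)) := by
        rw [Finset.sum_congr rfl hinner, Finset.sum_const, nsmul_eq_mul, hnotF_card, hcastpool]
        rw [Nat.cast_sub ht]
    _ = ∑ ω ∈ fib j t p, ((∑ l ∈ ltF k t, f (ω.val l))
          + ((k : ℝ) - t) * (T - ∑ l ∈ ltF k t, f (ω.val l)) / ((N : ℝ) - 1 - t)) := by
        rw [Finset.sum_congr rfl (fun ω hω => by rw [hSt ω hω]), Finset.sum_const, nsmul_eq_mul]
        ring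

lemma pool_bound (hN : k + 2 < N) {t : ℕ} (ht : t ≤ k) (f : Fin N → ℝ) (m : ℝ)
    (hf0 : ∀ i, 0 ≤ f i) (hfm : ∀ i, i ≠ j → f i ≤ m) (ω : Tuples N k j) :
    0 ≤ (∑ i ∈ univ.erase j, f i) - (∑ l ∈ ltF k t, f (ω.val l)) ∧
    (∑ i ∈ univ.erase j, f i) - (∑ l ∈ ltF k t, f (ω.val l)) ≤ ((N : ℝ) - 1 - t) * m := by
  classical
  set pre' : Finset (Fin N) := (ltF k t).image ω.val with hpre'
  have hinj : Set.InjOn ω.val (ltF k t) := fun a _ b _ hab => ω.2.1 hab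
  have hsub : pre' ⊆ univ.erase j := by
    intro x hx
    obtain ⟨m', _, rfl⟩ := Finset.mem_image.mp hx
    exact Finset.mem_erase.mpr ⟨ω.2.2 m', mem_univ _⟩
  have hSt : ∑ l ∈ ltF k t, f (ω.val l) = ∑ x ∈ pre', f x :=
    (Finset.sum_image (fun a ha b hb hab => hinj ha hb hab)).symm
  have hdiff : (∑ i ∈ univ.erase j, f i) - (∑ l ∈ ltF k t, f (ω.val l))
      = ∑ x ∈ (univ.erase j) \ pre', f x := by
    rw [hSt, Finset.sum_sdiff_eq_sub hsub]
  have hcard : ((univ.erase j) \ pre').card = N - 1 - t := by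
    rw [Finset.card_sdiff_of_subset hsub, Finset.card_erase_of_mem (mem_univ j), card_univ,
      Fintype.card_fin, hpre', Finset.card_image_of_injOn hinj, card_ltF t ht]
  constructor
  · rw [hdiff]
    exact Finset.sum_nonneg fun x _ => hf0 x
  · rw [hdiff]
    have hle : ∑ x ∈ (univ.erase j) \ pre', f x ≤ ((univ.erase j) \ pre').card • m := by
      refine Finset.sum_le_card_nsmul _ _ _ fun x hx => ?_
      exact hfm x (Finset.mem_erase.mp (Finset.mem_sdiff.mp hx).1).1
    rw [hcard] at hle
    have h1 : t ≤ N - 1 := by omega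
    have h2 : 1 ≤ N := by omega
    have : ((N - 1 - t : ℕ) : ℝ) = (N : ℝ) - 1 - t := by
      push_cast [Nat.cast_sub h1, Nat.cast_sub h2]
      ring
    rw [nsmul_eq_mul, this] at hle
    exact hle

open scoped Classical in
lemma setIntegral_uniform (g : Tuples N k j → ℝ) (s : Set (Tuples N k j)) :
    ∫ ω in s, g ω ∂(uniformTuples N k j)
      = ((Fintype.card (Tuples N k j) : ℝ))⁻¹ * ∑ ω ∈ univ.filter (· ∈ s), g ω := by
  classical
  haveI : MeasurableSingletonClass (Tuples N k j) := ⟨fun _ => trivial⟩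
  haveI : IsFiniteMeasure (uniformTuples N k j) := by
    constructor
    rw [uniformTuples, Measure.smul_apply, smul_eq_mul, Measure.count_univ,
      ENat.card_eq_coe_fintype_card, ENat.toENNReal_coe]
    rcases Nat.eq_zero_or_pos (Fintype.card (Tuples N k j)) with h | h
    · simp [h]
    · rw [ENNReal.inv_mul_cancel (by exact_mod_cast h.ne') (ENNReal.natCast_ne_top _)]
      exact ENNReal.one_lt_top
  rw [← MeasureTheory.integral_indicator (by trivial)]
  rw [integral_fintype (Integrable.of_finite)]
  have hμ : ∀ ω : Tuples N k j, ((uniformTuples N k j) {ω}).toReal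
      = ((Fintype.card (Tuples N k j) : ℝ))⁻¹ := by
    intro ω
    rw [uniformTuples, Measure.smul_apply, smul_eq_mul, Measure.count_singleton, mul_one,
      ENNReal.toReal_inv]
    simp
  simp_rw [measureReal_def, hμ, smul_eq_mul]
  rw [← Finset.mul_sum]
  congr 1
  rw [Finset.sum_filter]
  exact Finset.sum_congr rfl fun ω _ => (Set.indicator_apply s g ω)

lemma zf_eq_condexp (hN : k + 2 < N) (Y : Fin k → Tuples N k j → ℝ) (f : Fin N → ℝ)
    (hfY : ∀ l ω, Y l ω = f (ω.val l)) {t : ℕ} (ht : t ≤ k) :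
    (fun ω : Tuples N k j => (∑ l ∈ ltF k t, f (ω.val l))
        + ((k : ℝ) - t) * ((∑ i ∈ univ.erase j, f i) - ∑ l ∈ ltF k t, f (ω.val l))
          / ((N : ℝ) - 1 - t))
      =ᵐ[uniformTuples N k j]
      condExp ((natFilt k Y) t) (uniformTuples N k j) (fun ω => ∑ l, Y l ω) := by
  classical
  haveI : MeasurableSingletonClass (Tuples N k j) := ⟨fun _ => trivial⟩
  haveI hprob : IsProbabilityMeasure (uniformTuples N k j) := uniform_prob hN
  have hm : (natFilt k Y) t ≤ (⊤ : MeasurableSpace (Tuples N k j)) := le_top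
  haveI : SigmaFinite ((uniformTuples N k j).trim hm) :=
    @IsFiniteMeasure.toSigmaFinite _ _ _ (isFiniteMeasure_trim hm)
  have hFG : (natFilt k Y) t ≤ MeasurableSpace.comap (pmap (N := N) (k := k) (j := j) t) ⊤ := by
    refine iSup_le fun l => iSup_le fun hl => ?_
    have hYl : Y l = (fun v : Fin k → Fin N => f (v l)) ∘ pmap t := by
      funext ω
      simp [hfY, pmap, hl]
    rw [hYl, ← MeasurableSpace.comap_comp]
    exact MeasurableSpace.comap_mono le_top
  refine (ae_eq_condExp_of_forall_setIntegral_eq hm (Integrable.of_finite)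
    (fun s _ _ => Integrable.of_finite.integrableOn) ?_ ?_)
  · -- integral equality on sets
    intro s hs _
    obtain ⟨B, -, rfl⟩ := MeasurableSpace.measurableSet_comap.mp (hFG s hs)
    rw [setIntegral_uniform, setIntegral_uniform]
    congr 1
    set A : Finset (Tuples N k j) := univ.filter (· ∈ pmap t ⁻¹' B) with hA
    have hmaps : ∀ ω ∈ A, pmap t ω ∈ A.image (pmap t) := fun ω hω => mem_image_of_mem _ hω
    rw [← Finset.sum_fiberwise_of_maps_to hmaps, ← Finset.sum_fiberwise_of_maps_to hmaps]
    refine Finset.sum_congr rfl fun q hq => ?_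
    obtain ⟨ω₀, hω₀A, rfl⟩ := Finset.mem_image.mp hq
    have hfilter : A.filter (fun ω => pmap t ω = pmap t ω₀) = fib j t (pmap t ω₀) := by
      ext ω
      simp only [hA, fib, Finset.mem_filter, mem_univ, true_and, Set.mem_preimage]
      constructor
      · exact fun h => h.2
      · intro h
        refine ⟨?_, h⟩
        rw [h]
        exact (Finset.mem_filter.mp hω₀A).2
    rw [hfilter]
    have := fiber_sum (j := j) hN ht f (pmap t ω₀)
    simp_rw [hfY]
    exact this.symm
  · -- strong measurability
    have hYm : ∀ l ∈ ltF k t, Measurable[(natFilt k Y) t] (Y l) := by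
      intro l hl
      have hl' : (l : ℕ) < t := by simpa [ltF] using hl
      have hle : MeasurableSpace.comap (Y l) inferInstance ≤ (natFilt k Y) t :=
        le_iSup_of_le l (le_iSup_of_le hl' le_rfl)
      exact fun s hs => hle _ ⟨s, hs, rfl⟩
    have hmeas : Measurable[(natFilt k Y) t] (fun ω : Tuples N k j =>
        (∑ l ∈ ltF k t, f (ω.val l))
        + ((k : ℝ) - t) * ((∑ i ∈ univ.erase j, f i) - ∑ l ∈ ltF k t, f (ω.val l))
          / ((N : ℝ) - 1 - t)) := by
      have hsum : Measurable[(natFilt k Y) t] (fun ω : Tuples N k j =>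
          ∑ l ∈ ltF k t, f (ω.val l)) := by
        have : (fun ω : Tuples N k j => ∑ l ∈ ltF k t, f (ω.val l))
            = fun ω => ∑ l ∈ ltF k t, Y l ω := by
          funext ω
          exact Finset.sum_congr rfl fun l _ => (hfY l ω).symm
        rw [this]
        exact Finset.measurable_sum _ hYm
      exact (hsum.add (((measurable_const.sub hsum).const_mul _).div_const _))
    exact ⟨_, hmeas.stronglyMeasurable, Filter.EventuallyEq.rfl⟩

lemma diff_bound (s1 m y R A K : ℝ) (hm : 0 ≤ m) (hy0 : 0 ≤ y) (hym : y ≤ m)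
    (hR0 : 0 ≤ R) (hRm : R ≤ A * m) (hA : 2 ≤ A) (hK0 : 0 ≤ K) (hKA : K + 2 ≤ A) :
    |(y + s1 + K * R / A) - (s1 + (K + 1) * (R + y) / (A + 1))| ≤ m := by
  have hA0 : (0:ℝ) < A := by linarith
  have hA1 : (0:ℝ) < A + 1 := by linarith
  have key : (y + s1 + K * R / A) - (s1 + (K + 1) * (R + y) / (A + 1))
      = (A - K) / (A + 1) * (y - R / A) := by
    field_simp
    ring
  rw [key, abs_mul]
  have h1 : |(A - K) / (A + 1)| ≤ 1 := by
    rw [abs_of_nonneg (div_nonneg (by linarith) hA1.le), div_le_one hA1]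
    linarith
  have hRA : R / A ≤ m := (div_le_iff₀ hA0).mpr (by linarith [hRm])
  have hRA0 : 0 ≤ R / A := div_nonneg hR0 hA0.le
  have h2 : |y - R / A| ≤ m := abs_le.mpr ⟨by linarith, by linarith⟩
  calc |(A - K) / (A + 1)| * |y - R / A| ≤ 1 * m :=
      mul_le_mul h1 h2 (abs_nonneg _) zero_le_one
    _ = m := one_mul m

end Stmt10Aux

theorem stmt_10 (n N k : ℕ) (hk2 : k + 2 < N) (hk1 : 1 ≤ k) (j : Fin N)
    (φ : Fin N → Fin n → ℝ) (hcol : ∀ i, ∑ t, φ i t ^ 2 = 1)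
    (μc : ℝ) (hμc : 0 ≤ μc)
    (hμ_ub : ∀ i l : Fin N, i ≠ l → |∑ t, φ i t * φ l t| ≤ μc)
    (Y : Fin k → Tuples N k j → ℝ)
    (hY : ∀ l ω, Y l ω = (∑ t, φ j t * φ (ω.val l) t) ^ 2)
    (Z : ℕ → Tuples N k j → ℝ)
    (hZ : ∀ t, Z t =
      condExp ((natFilt k Y) t) (uniformTuples N k j) (fun ω => ∑ l, Y l ω)) :
    Martingale Z (natFilt k Y) (uniformTuples N k j) ∧
    ∀ t : ℕ, 1 ≤ t → t ≤ k →
      ∀ᵐ ω ∂(uniformTuples N k j),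
        |Z t ω - Z (t - 1) ω| ≤ 2 * μc ^ 2 * ((N : ℝ) - 2) / ((N : ℝ) - k - 2) := by
  classical
  haveI : IsProbabilityMeasure (uniformTuples N k j) := Stmt10Aux.uniform_prob hk2
  set f : Fin N → ℝ := fun i => (∑ s, φ j s * φ i s) ^ 2 with hfdef
  have hfY : ∀ l ω, Y l ω = f (ω.val l) := fun l ω => hY l ω
  constructor
  · have hZf : Z = fun t => condExp ((natFilt k Y) t) (uniformTuples N k j)
        (fun ω => ∑ l, Y l ω) := funext hZ
    rw [hZf]
    exact martingale_condExp _ _ _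
  · intro t ht1 htk
    have h1 := Stmt10Aux.zf_eq_condexp hk2 Y f hfY htk
    have h2 := Stmt10Aux.zf_eq_condexp hk2 Y f hfY (le_trans (Nat.sub_le t 1) htk)
    rw [← hZ t] at h1
    rw [← hZ (t - 1)] at h2
    have hk3 : (k : ℝ) + 3 ≤ N := by exact_mod_cast (show k + 3 ≤ N by omega)
    have ht' : (t : ℝ) ≤ k := by exact_mod_cast htk
    have ht1' : (1 : ℝ) ≤ t := by exact_mod_cast ht1
    have hm : (0:ℝ) ≤ μc ^ 2 := sq_nonneg μc
    have hf0 : ∀ i, 0 ≤ f i := fun i => sq_nonneg _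
    have hfm : ∀ i, i ≠ j → f i ≤ μc ^ 2 := by
      intro i hi
      have h := hμ_ub j i (fun h' => hi h'.symm)
      calc f i = |∑ s, φ j s * φ i s| ^ 2 := (sq_abs _).symm
        _ ≤ μc ^ 2 := pow_le_pow_left₀ (abs_nonneg _) h 2
    filter_upwards [h1, h2] with ω e1 e2
    rw [← e1, ← e2]
    have hcast1 : ((t - 1 : ℕ) : ℝ) = (t : ℝ) - 1 := by
      rw [Nat.cast_sub ht1, Nat.cast_one]
    rw [hcast1]
    set lt : Fin k := ⟨t - 1, by omega⟩ with hltdef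
    have hnot : lt ∉ Stmt10Aux.ltF k (t - 1) := by
      simp only [Stmt10Aux.ltF, Finset.mem_filter, Finset.mem_univ, true_and, hltdef]
      omega
    have hsplitF : Stmt10Aux.ltF k t = insert lt (Stmt10Aux.ltF k (t - 1)) := by
      ext l
      simp only [Stmt10Aux.ltF, Finset.mem_insert, Finset.mem_filter, Finset.mem_univ, true_and,
        Fin.ext_iff, hltdef]
      omega
    have hsum_t : ∑ l ∈ Stmt10Aux.ltF k t, f (ω.val l)
        = f (ω.val lt) + ∑ l ∈ Stmt10Aux.ltF k (t - 1), f (ω.val l) := by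
      rw [hsplitF, Finset.sum_insert hnot]
    obtain ⟨hR0, hRm⟩ := Stmt10Aux.pool_bound hk2 htk f (μc ^ 2) hf0 hfm ω
    rw [hsum_t] at hR0 hRm
    rw [hsum_t]
    have e3 : (k : ℝ) - ((t : ℝ) - 1) = ((k : ℝ) - t) + 1 := by ring
    have e4 : (N : ℝ) - 1 - ((t : ℝ) - 1) = ((N : ℝ) - 1 - t) + 1 := by ring
    have e5 : (∑ i ∈ Finset.univ.erase j, f i) - ∑ l ∈ Stmt10Aux.ltF k (t - 1), f (ω.val l)
        = ((∑ i ∈ Finset.univ.erase j, f i)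
            - (f (ω.val lt) + ∑ l ∈ Stmt10Aux.ltF k (t - 1), f (ω.val l))) + f (ω.val lt) := by
      ring
    rw [e3, e4, e5]
    have hbound := Stmt10Aux.diff_bound
      (∑ l ∈ Stmt10Aux.ltF k (t - 1), f (ω.val l)) (μc ^ 2) (f (ω.val lt))
      ((∑ i ∈ Finset.univ.erase j, f i)
        - (f (ω.val lt) + ∑ l ∈ Stmt10Aux.ltF k (t - 1), f (ω.val l)))
      ((N : ℝ) - 1 - t) ((k : ℝ) - t)
      hm (hf0 _) (hfm _ (ω.2.2 lt)) hR0 (by linarith [hRm]) (by linarith) (by linarith) (by linarith)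
    refine le_trans hbound ?_
    have hd : (0:ℝ) < (N : ℝ) - k - 2 := by linarith
    rw [le_div_iff₀ hd]
    nlinarith [mul_nonneg hm (show (0:ℝ) ≤ (N : ℝ) + k - 2 by linarith)]
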